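/- The relaxed distance δ̄ on Γ(D) is right invariant under S^i(D): for every η, γ ∈ Γ(D) and every μ_D-essentially injective measure-preserving map h ∈ S^i(D), δ̄(η ∘ h, γ ∘ h) = δ̄(η, γ), where η ∘ h denotes the plan with disintegration (η ∘ h)_a = η_{h(a)}. -/

import Mathlib

open MeasureTheory Set Filter
open scoped ENNReal NNReal

noncomputable section


abbrev Euc (n : ℕ) := EuclideanSpace ℝ (Fin n)

/-- A plan in `Γ(D)`: probability measure on `D × D` with both marginals `μD`. -/
def IsPlan {n : ℕ} (μD : Measure (Euc n)) (γ : Measure (Euc n × Euc n)) : Prop :=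
  IsProbabilityMeasure γ ∧ γ.map Prod.fst = μD ∧ γ.map Prod.snd = μD

/-- Absolute continuity of a curve on `[0,1]`. -/
def AbsCts {n : ℕ} (ω : ℝ → Euc n) : Prop :=
  IntegrableOn (deriv ω) (Icc (0:ℝ) 1) ∧
  ∀ t ∈ Icc (0:ℝ) 1, ω t = ω 0 + ∫ s in Ioc (0:ℝ) t, deriv ω s

open Classical in
/-- Kinetic action of a curve: `∫₀¹ ½|ω̇|²` if absolutely continuous, `+∞` otherwise. -/
def pathAction {n : ℕ} (ω : ℝ → Euc n) : ℝ≥0∞ :=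
  if _h : AbsCts ω then ∫⁻ t in Icc (0:ℝ) 1, ENNReal.ofReal (‖deriv ω t‖ ^ 2 / 2) else ⊤

/-- Generalized incompressible flow on `[0,1]` connecting the plan `η` to the plan `γ`. -/
def IsGenFlow {n : ℕ} (μD : Measure (Euc n)) (η γ : Measure (Euc n × Euc n))
    (P : Measure ((ℝ → Euc n) × Euc n)) : Prop :=
  IsProbabilityMeasure P ∧
  (∀ t ∈ Icc (0:ℝ) 1, P.map (fun p => p.1 t) = μD) ∧
  P.map (fun p => (p.1 0, p.2)) = η ∧
  P.map (fun p => (p.1 1, p.2)) = γ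

/-- Action of a generalized flow. -/
def flowAction {n : ℕ} (P : Measure ((ℝ → Euc n) × Euc n)) : ℝ≥0∞ :=
  ∫⁻ p, pathAction p.1 ∂P

/-- Squared relaxed distance `δ̄²(η,γ)`. -/
def deltaSq {n : ℕ} (μD : Measure (Euc n)) (η γ : Measure (Euc n × Euc n)) : ℝ≥0∞ :=
  ⨅ P : {P : Measure ((ℝ → Euc n) × Euc n) // IsGenFlow μD η γ P}, flowAction P.1

end


set_option maxHeartbeats 800000 in
open MeasureTheory Set Filter in
private lemma isGenFlow_map_label {n : ℕ} {μD : Measure (Euc n)}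
    {η γ : Measure (Euc n × Euc n)} {P : Measure ((ℝ → Euc n) × Euc n)}
    (hP : IsGenFlow μD η γ P) (g : Euc n → Euc n) (hg : Measurable g) :
    IsGenFlow μD (η.map (Prod.map id g)) (γ.map (Prod.map id g))
      (P.map (fun p => (p.1, g p.2))) := by
  obtain ⟨hprob, htime, h0, h1⟩ := hP
  have hT : Measurable (fun p : (ℝ → Euc n) × Euc n => (p.1, g p.2)) :=
    measurable_fst.prodMk (hg.comp measurable_snd)
  have he0 : Measurable (fun p : (ℝ → Euc n) × Euc n => (p.1 0, p.2)) :=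
    ((measurable_pi_apply 0).comp measurable_fst).prodMk measurable_snd
  have he1 : Measurable (fun p : (ℝ → Euc n) × Euc n => (p.1 1, p.2)) :=
    ((measurable_pi_apply 1).comp measurable_fst).prodMk measurable_snd
  have := hprob
  refine ⟨MeasureTheory.Measure.isProbabilityMeasure_map hT.aemeasurable, ?_, ?_, ?_⟩
  · intro t ht
    have het : Measurable (fun p : (ℝ → Euc n) × Euc n => p.1 t) :=
      (measurable_pi_apply t).comp measurable_fst
    rw [Measure.map_map het hT]
    exact htime t ht
  · rw [Measure.map_map he0 hT, ← h0,
      Measure.map_map (measurable_id.prodMap hg) he0]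
    rfl
  · rw [Measure.map_map he1 hT, ← h1,
      Measure.map_map (measurable_id.prodMap hg) he1]
    rfl

open MeasureTheory in
private lemma lint_fst_map_le {X Y : Type*} [MeasurableSpace X] [MeasurableSpace Y]
    (μ : Measure (X × Y)) (G : X → ℝ≥0∞) {g : Y → Y} (hg : Measurable g) :
    ∫⁻ p, G p.1 ∂(μ.map fun p => (p.1, g p.2)) ≤ ∫⁻ p, G p.1 ∂μ :=
  lintegral_map_le (fun p : X × Y => G p.1) (fun p : X × Y => (p.1, g p.2))

open MeasureTheory Set Filter in
private lemma deltaSq_map_le {n : ℕ} (μD : Measure (Euc n))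
    (η γ : Measure (Euc n × Euc n)) (g : Euc n → Euc n) (hg : Measurable g) :
    deltaSq μD (η.map (Prod.map id g)) (γ.map (Prod.map id g)) ≤ deltaSq μD η γ := by
  simp only [deltaSq]
  refine le_iInf fun P => ?_
  refine le_trans (iInf_le (fun Q : {Q : Measure ((ℝ → Euc n) × Euc n) //
      IsGenFlow μD (η.map (Prod.map id g)) (γ.map (Prod.map id g)) Q} => flowAction Q.1)
    ⟨P.1.map (fun p => (p.1, g p.2)), isGenFlow_map_label P.2 g hg⟩) ?_
  exact lint_fst_map_le P.1 pathAction hg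

open MeasureTheory Set Filter in
private lemma map_map_cancel {n : ℕ} {μD : Measure (Euc n)}
    {η : Measure (Euc n × Euc n)} (hsnd : η.map Prod.snd = μD)
    {g h : Euc n → Euc n} (hg : Measurable g) (hh : Measurable h)
    (hinv : ∀ᵐ x ∂μD, h (g x) = x) :
    (η.map (Prod.map id g)).map (Prod.map id h) = η := by
  rw [Measure.map_map (measurable_id.prodMap hh) (measurable_id.prodMap hg)]
  have h2 : ∀ᵐ p ∂η, h (g p.2) = p.2 := by
    rw [← hsnd] at hinv
    have hms : MeasurableSet {x : Euc n | h (g x) = x} :=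
      measurableSet_eq_fun (hh.comp hg) measurable_id
    exact (MeasureTheory.ae_map_iff measurable_snd.aemeasurable hms).mp hinv
  have heq : (Prod.map id h ∘ Prod.map id g) =ᵐ[η] id := by
    filter_upwards [h2] with p hp
    exact Prod.ext rfl hp
  rw [Measure.map_congr heq, Measure.map_id]

/-- **Right invariance of `δ̄` under `Sⁱ(D)`** (Proposition `propotopo`): if `h` is a
μ_D-essentially injective measure-preserving map with μ_D-a.e. inverse `g`, then
`δ̄(η ∘ h, γ ∘ h) = δ̄(η, γ)`, where `η ∘ h = η_{h(a)} ⊗ μ_D = (id × g)_# η`. -/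
theorem deltaSq_right_invariant {n : ℕ} (D : Set (Euc n)) (hD : IsCompact D)
    (μD : Measure (Euc n)) [IsProbabilityMeasure μD] (hμD : ∀ᵐ x ∂μD, x ∈ D)
    (h g : Euc n → Euc n) (hh : Measurable h) (hg : Measurable g)
    (hhp : μD.map h = μD)
    (hinv₁ : ∀ᵐ x ∂μD, g (h x) = x) (hinv₂ : ∀ᵐ x ∂μD, h (g x) = x)
    (η γ : Measure (Euc n × Euc n)) (hη : IsPlan μD η) (hγ : IsPlan μD γ) :
    deltaSq μD (η.map (Prod.map id g)) (γ.map (Prod.map id g)) = deltaSq μD η γ := by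
  refine le_antisymm (deltaSq_map_le μD η γ g hg) ?_
  have e1 : (η.map (Prod.map id g)).map (Prod.map id h) = η :=
    map_map_cancel hη.2.2 hg hh hinv₂
  have e2 : (γ.map (Prod.map id g)).map (Prod.map id h) = γ :=
    map_map_cancel hγ.2.2 hg hh hinv₂
  have := deltaSq_map_le μD (η.map (Prod.map id g)) (γ.map (Prod.map id g)) h hh
  rwa [e1, e2] at this
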